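/- Let D ≥ 2 be an integer and β > D/(D-1) a real number; set ℓ = ⌊β⌋ and β̂ = β - ⌊β⌋, and let q_D(β) = -log x(β)/log D, where x(β) is the unique root in (0,1) of 1 = (D-1)(x + x² + ⋯ + x^{ℓ-1} + β̂ x^{ℓ}) (this root exists since (D-1)(β-1) > 1). Suppose P : ℕ → (0,1] satisfies P_0 = 1 and that there exists a constant C₁ > 0 such that P_k ≥ C₁ 3^{-k} (∏_{i=k-ℓ+1}^{k-1} P_i^{D-1}) · P_{k-ℓ}^{β̂(D-1)} for all k ≥ ℓ. Then limsup_{k→∞} (1/k) · log(log(1/P_k))/log D ≤ q_D(β). -/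

import Mathlib

open Filter Topology

set_option maxHeartbeats 1000000 in
/-- Comparison step for `β > D/(D-1)`: if `P : ℕ → (0,1]` satisfies `P_0 = 1` and the
lower recursion bound `P_k ≥ C₁ 3^{-k} (∏_{i=k-ℓ+1}^{k-1} P_i^{D-1}) P_{k-ℓ}^{β̂(D-1)}`
for `k ≥ ℓ`, where `ℓ = ⌊β⌋` and `β̂ = β - ⌊β⌋`, then
`limsup_{k→∞} (1/k) log_D log(1/P_k) ≤ q_D(β)`, where `q_D(β) = -log x(β)/log D`
and `x(β)` is the unique root in `(0,1)` of
`1 = (D-1)(x + ⋯ + x^{ℓ-1} + β̂ x^{ℓ})`. -/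
theorem decay_of_tails_jsq_stmt4
    (D : ℕ) (hD : 2 ≤ D) (β : ℝ) (hβ : (D:ℝ) / ((D:ℝ) - 1) < β)
    (q : ℝ)
    (hx : (D:ℝ) ^ (-q) ∈ Set.Ioo (0:ℝ) 1)
    (heq : 1 = ((D:ℝ) - 1) *
      ((∑ j ∈ Finset.Icc 1 (⌊β⌋₊ - 1), ((D:ℝ) ^ (-q)) ^ j)
        + (β - (⌊β⌋₊ : ℝ)) * ((D:ℝ) ^ (-q)) ^ ⌊β⌋₊))
    (P : ℕ → ℝ) (hP : ∀ k, P k ∈ Set.Ioc (0:ℝ) 1) (hP0 : P 0 = 1)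
    (C₁ : ℝ) (hC₁ : 0 < C₁)
    (hrec : ∀ k : ℕ, ⌊β⌋₊ ≤ k →
      C₁ * (3:ℝ) ^ (-(k:ℝ)) * (∏ i ∈ Finset.Ico (k - ⌊β⌋₊ + 1) k, P i ^ (D - 1))
        * P (k - ⌊β⌋₊) ^ ((β - (⌊β⌋₊ : ℝ)) * ((D:ℝ) - 1)) ≤ P k) :
    ∀ ε : ℝ, 0 < ε → ∀ᶠ k : ℕ in Filter.atTop,
      (1 / (k:ℝ)) * (Real.log (Real.log (1 / P k)) / Real.log D) ≤ q + ε := by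
  intro ε hε
  have hD2 : (2:ℝ) ≤ (D:ℝ) := by exact_mod_cast hD
  have hDpos : (0:ℝ) < D := by linarith
  have hD1 : (1:ℝ) < (D:ℝ) := by linarith
  have hD1' : (1:ℝ) ≤ (D:ℝ) - 1 := by linarith
  have hlogD : 0 < Real.log D := Real.log_pos hD1
  set L := ⌊β⌋₊ with hLdef
  have hβ1 : (1:ℝ) < β := by
    have h1 : (1:ℝ) < (D:ℝ) / ((D:ℝ) - 1) := by
      rw [lt_div_iff₀ (by linarith)]; linarith
    linarith
  have hL1 : 1 ≤ L := by
    rw [hLdef]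
    exact Nat.le_floor (by exact_mod_cast hβ1.le)
  have hbh0 : 0 ≤ β - (L:ℝ) := by
    have := Nat.floor_le (le_of_lt (by linarith : (0:ℝ) < β))
    rw [← hLdef] at this
    linarith
  set x := (D:ℝ) ^ (-q) with hxdef
  have hx0 : 0 < x := hx.1
  have hx1 : x < 1 := hx.2
  have hq : 0 < q := by
    by_contra h
    push_neg at h
    have : (1:ℝ) ≤ x := Real.one_le_rpow hD1.le (by linarith)
    linarith
  set r := (D:ℝ) ^ (-(ε/2)) with hrdef
  have hr0 : 0 < r := Real.rpow_pos_of_pos hDpos _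
  have hr1 : r < 1 := Real.rpow_lt_one_of_one_lt_of_neg hD1 (by linarith)
  set lam := (D:ℝ) ^ (q + ε/2) with hlamdef
  have hlam1 : 1 < lam := (Real.one_lt_rpow_iff_of_pos hDpos).2 (Or.inl ⟨hD1, by linarith⟩)
  have hlam0 : 0 < lam := by linarith
  have hlaminv : lam⁻¹ = x * r := by
    rw [hlamdef, hxdef, hrdef, ← Real.rpow_add hDpos, ← Real.rpow_neg hDpos.le]
    ring_nf
  set R : ℕ → ℝ := fun k => - Real.log (P k) with hRdef
  have hR0 : ∀ k, 0 ≤ R k := by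
    intro k
    have := Real.log_nonpos (hP k).1.le (hP k).2
    simp only [hRdef]
    linarith
  set c := -Real.log C₁ with hcdef
  set a := Real.log 3 with hadef
  have hRrec : ∀ k, L ≤ k → R k ≤ c + a * k
      + ((D:ℝ) - 1) * (∑ i ∈ Finset.Ico (k - L + 1) k, R i)
      + (β - (L:ℝ)) * ((D:ℝ) - 1) * R (k - L) := by
    intro k hk
    have hprodpos : 0 < ∏ i ∈ Finset.Ico (k - L + 1) k, P i ^ (D - 1) :=
      Finset.prod_pos fun i _ => pow_pos (hP i).1 _
    have h3 : (0:ℝ) < (3:ℝ) ^ (-(k:ℝ)) := Real.rpow_pos_of_pos (by norm_num) _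
    have hrp : 0 < P (k - L) ^ ((β - (L:ℝ)) * ((D:ℝ) - 1)) :=
      Real.rpow_pos_of_pos (hP _).1 _
    have hlog := Real.log_le_log (by positivity) (hrec k hk)
    rw [Real.log_mul (by positivity) (ne_of_gt hrp),
      Real.log_mul (by positivity) (ne_of_gt hprodpos),
      Real.log_mul (ne_of_gt hC₁) (ne_of_gt h3),
      Real.log_rpow (by norm_num : (0:ℝ) < 3),
      Real.log_rpow (hP _).1,
      Real.log_prod (fun i _ => ne_of_gt (pow_pos (hP i).1 _))] at hlog
    simp only [Real.log_pow] at hlog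
    have hcast : ((D - 1 : ℕ) : ℝ) = (D:ℝ) - 1 := by
      have : 1 ≤ D := by omega
      push_cast [Nat.cast_sub this]
      ring
    rw [hcast] at hlog
    have hsum : ∑ i ∈ Finset.Ico (k - L + 1) k, ((D:ℝ) - 1) * Real.log (P i)
        = -(((D:ℝ) - 1) * ∑ i ∈ Finset.Ico (k - L + 1) k, R i) := by
      rw [Finset.mul_sum, ← Finset.sum_neg_distrib]
      apply Finset.sum_congr rfl
      intro i _
      simp only [hRdef]
      ring
    rw [hsum] at hlog
    have h1 : Real.log (P k) = -R k := by simp [hRdef]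
    have h2 : Real.log (P (k - L)) = -R (k - L) := by simp [hRdef]
    rw [h1, h2] at hlog
    simp only [hcdef, hadef]
    linarith
  -- construct M
  have hne : (Finset.range L).Nonempty := ⟨0, Finset.mem_range.2 (by omega)⟩
  have h1r : 0 < 1 - r := by linarith
  have hlm1 : 0 < lam - 1 := by linarith
  set S := (Finset.range L).sup' hne R with hSdef
  set M := max (max (max 1 (c / (1 - r))) (a / ((1 - r) * (lam - 1)))) S with hMdef
  have hM1 : (1:ℝ) ≤ M :=
    le_max_of_le_left (le_max_of_le_left (le_max_left _ _))
  have hM0 : (0:ℝ) < M := lt_of_lt_of_le one_pos hM1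
  have hMc : c ≤ (1 - r) * M := by
    have h : c / (1 - r) ≤ M :=
      le_max_of_le_left (le_max_of_le_left (le_max_right _ _))
    rw [div_le_iff₀ h1r] at h
    linarith [h]
  have hMa : a ≤ (1 - r) * (lam - 1) * M := by
    have h : a / ((1 - r) * (lam - 1)) ≤ M :=
      le_max_of_le_left (le_max_right _ _)
    rw [div_le_iff₀ (by positivity)] at h
    linarith [h]
  have hMS : ∀ k, k < L → R k ≤ M := by
    intro k hk
    exact le_trans (Finset.le_sup' R (Finset.mem_range.2 hk)) (le_max_right _ _)
  -- key induction
  have hkey : ∀ k, R k ≤ M * lam ^ k := by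
    intro k
    induction k using Nat.strong_induction_on with
    | _ k ih =>
      rcases lt_or_ge k L with hk | hk
      · calc R k ≤ M := hMS k hk
          _ = M * 1 := (mul_one M).symm
          _ ≤ M * lam ^ k := by
            apply mul_le_mul_of_nonneg_left (one_le_pow₀ hlam1.le) hM0.le
      · have hrecK := hRrec k hk
        have hsb : ∑ i ∈ Finset.Ico (k - L + 1) k, R i
            ≤ ∑ i ∈ Finset.Ico (k - L + 1) k, M * lam ^ i := by
          apply Finset.sum_le_sum
          intro i hi
          have hik : i < k := (Finset.mem_Ico.1 hi).2
          exact ih i hik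
        have hklR : R (k - L) ≤ M * lam ^ (k - L) := ih (k - L) (by omega)
        -- power identity
        have hpow : ∀ j, j ≤ k → lam ^ (k - j) = lam ^ k * (x * r) ^ j := by
          intro j hj
          rw [← hlaminv, inv_pow, eq_mul_inv_iff_mul_eq₀ (by positivity), ← pow_add]
          congr 1
          omega
        -- sum reindexing
        have hsumeq : ∑ i ∈ Finset.Ico (k - L + 1) k, lam ^ i
            = ∑ j ∈ Finset.Icc 1 (L - 1), lam ^ (k - j) := by
          apply Finset.sum_nbij' (fun i => k - i) (fun j => k - j)
          · intro i hi
            simp only [Finset.mem_Ico] at hi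
            simp only [Finset.mem_Icc]
            omega
          · intro j hj
            simp only [Finset.mem_Icc] at hj
            simp only [Finset.mem_Ico]
            omega
          · intro i hi
            simp only [Finset.mem_Ico] at hi
            omega
          · intro j hj
            simp only [Finset.mem_Icc] at hj
            omega
          · intro i hi
            simp only [Finset.mem_Ico] at hi
            congr 1
            omega
        have hs1 : ∑ j ∈ Finset.Icc 1 (L - 1), lam ^ (k - j)
            ≤ (∑ j ∈ Finset.Icc 1 (L - 1), x ^ j) * (r * lam ^ k) := by
          rw [Finset.sum_mul]
          apply Finset.sum_le_sum
          intro j hj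
          obtain ⟨hj1, hj2⟩ := Finset.mem_Icc.1 hj
          have hjk : j ≤ k := by omega
          rw [hpow j hjk, mul_pow]
          have hrj : r ^ j ≤ r := by
            calc r ^ j ≤ r ^ 1 := pow_le_pow_of_le_one hr0.le hr1.le hj1
              _ = r := pow_one r
          calc lam ^ k * (x ^ j * r ^ j) ≤ lam ^ k * (x ^ j * r) := by
                apply mul_le_mul_of_nonneg_left _ (by positivity)
                exact mul_le_mul_of_nonneg_left hrj (by positivity)
            _ = x ^ j * (r * lam ^ k) := by ring
        have hs2 : lam ^ (k - L) ≤ x ^ L * (r * lam ^ k) := by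
          rw [hpow L hk, mul_pow]
          have hrL : r ^ L ≤ r := by
            calc r ^ L ≤ r ^ 1 := pow_le_pow_of_le_one hr0.le hr1.le hL1
              _ = r := pow_one r
          calc lam ^ k * (x ^ L * r ^ L) ≤ lam ^ k * (x ^ L * r) := by
                apply mul_le_mul_of_nonneg_left _ (by positivity)
                exact mul_le_mul_of_nonneg_left hrL (by positivity)
            _ = x ^ L * (r * lam ^ k) := by ring
        have hA : ((D:ℝ) - 1) * (∑ i ∈ Finset.Ico (k - L + 1) k, lam ^ i)
            + (β - (L:ℝ)) * ((D:ℝ) - 1) * lam ^ (k - L) ≤ r * lam ^ k := by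
          calc ((D:ℝ) - 1) * (∑ i ∈ Finset.Ico (k - L + 1) k, lam ^ i)
                + (β - (L:ℝ)) * ((D:ℝ) - 1) * lam ^ (k - L)
              = ((D:ℝ) - 1) * (∑ j ∈ Finset.Icc 1 (L - 1), lam ^ (k - j))
                + (β - (L:ℝ)) * ((D:ℝ) - 1) * lam ^ (k - L) := by rw [hsumeq]
            _ ≤ ((D:ℝ) - 1) * ((∑ j ∈ Finset.Icc 1 (L - 1), x ^ j) * (r * lam ^ k))
                + (β - (L:ℝ)) * ((D:ℝ) - 1) * (x ^ L * (r * lam ^ k)) := by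
                apply add_le_add
                · exact mul_le_mul_of_nonneg_left hs1 (by linarith)
                · exact mul_le_mul_of_nonneg_left hs2 (by positivity)
            _ = (((D:ℝ) - 1) * ((∑ j ∈ Finset.Icc 1 (L - 1), x ^ j)
                + (β - (L:ℝ)) * x ^ L)) * (r * lam ^ k) := by ring
            _ = 1 * (r * lam ^ k) := by rw [← heq]
            _ = r * lam ^ k := one_mul _
        have hbern : 1 + (k:ℝ) * (lam - 1) ≤ lam ^ k := by
          have h := one_add_mul_le_pow (a := lam - 1) (by linarith) k
          have h2 : (1 + (lam - 1)) = lam := by ring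
          rw [h2] at h
          exact h
        have hck : c + a * k ≤ (1 - r) * M * lam ^ k := by
          have h2 : a * (k:ℝ) ≤ (1 - r) * (lam - 1) * M * k :=
            mul_le_mul_of_nonneg_right hMa (by positivity)
          have h3 : (1 - r) * M * (1 + (k:ℝ) * (lam - 1)) ≤ (1 - r) * M * lam ^ k :=
            mul_le_mul_of_nonneg_left hbern (by positivity)
          have h4 : (1 - r) * M * (1 + (k:ℝ) * (lam - 1))
              = (1 - r) * M + (1 - r) * (lam - 1) * M * (k:ℝ) := by ring
          linarith [h2, h3, hMc, h4]
        calc R k ≤ c + a * k + ((D:ℝ) - 1) * (∑ i ∈ Finset.Ico (k - L + 1) k, R i)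
              + (β - (L:ℝ)) * ((D:ℝ) - 1) * R (k - L) := hrecK
          _ ≤ c + a * k + ((D:ℝ) - 1) * (∑ i ∈ Finset.Ico (k - L + 1) k, M * lam ^ i)
              + (β - (L:ℝ)) * ((D:ℝ) - 1) * (M * lam ^ (k - L)) := by
              apply add_le_add
              apply add_le_add_right
              · exact mul_le_mul_of_nonneg_left hsb (by linarith)
              · exact mul_le_mul_of_nonneg_left hklR (by positivity)
          _ = c + a * k + M * (((D:ℝ) - 1) * (∑ i ∈ Finset.Ico (k - L + 1) k, lam ^ i)
              + (β - (L:ℝ)) * ((D:ℝ) - 1) * lam ^ (k - L)) := by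
              rw [← Finset.mul_sum]
              ring
          _ ≤ c + a * k + M * (r * lam ^ k) := by
              have := mul_le_mul_of_nonneg_left hA hM0.le
              linarith
          _ ≤ (1 - r) * M * lam ^ k + M * (r * lam ^ k) := by linarith [hck]
          _ = M * lam ^ k := by ring
  -- conclude
  obtain ⟨N, hN⟩ := exists_nat_ge (Real.log M / ((ε / 2) * Real.log D))
  filter_upwards [eventually_ge_atTop (max N 1)] with k hk
  have hk1 : 1 ≤ k := le_trans (le_max_right _ _) hk
  have hkN : (N:ℝ) ≤ (k:ℝ) := by exact_mod_cast le_trans (le_max_left _ _) hk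
  have hkpos : (0:ℝ) < (k:ℝ) := by exact_mod_cast hk1
  have hRe : Real.log (1 / P k) = R k := by
    rw [one_div, Real.log_inv]
  rw [hRe]
  rcases eq_or_lt_of_le (hR0 k) with h0 | h0
  · rw [← h0, Real.log_zero]
    rw [zero_div, mul_zero]
    linarith
  · have hlogR : Real.log (R k) ≤ Real.log (M * lam ^ k) :=
      Real.log_le_log h0 (hkey k)
    have hexp : Real.log (M * lam ^ k) = Real.log M + (k:ℝ) * ((q + ε/2) * Real.log D) := by
      rw [Real.log_mul (ne_of_gt hM0) (by positivity), Real.log_pow, hlamdef,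
        Real.log_rpow hDpos]
    have hlogM : Real.log M ≤ (k:ℝ) * ((ε/2) * Real.log D) := by
      rw [div_le_iff₀ (by positivity)] at hN
      calc Real.log M ≤ (N:ℝ) * ((ε/2) * Real.log D) := hN
        _ ≤ (k:ℝ) * ((ε/2) * Real.log D) := by
            exact mul_le_mul_of_nonneg_right hkN (by positivity)
    have hfin : Real.log (R k) ≤ (k:ℝ) * ((q + ε) * Real.log D) := by
      rw [hexp] at hlogR
      nlinarith [hlogR, hlogM]
    calc (1 / (k:ℝ)) * (Real.log (R k) / Real.log D)
        ≤ (1 / (k:ℝ)) * (((k:ℝ) * ((q + ε) * Real.log D)) / Real.log D) := by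
          have h1k : (0:ℝ) ≤ 1 / (k:ℝ) := by positivity
          apply mul_le_mul_of_nonneg_left _ h1k
          exact (div_le_div_iff_of_pos_right hlogD).2 hfin
      _ = q + ε := by
          field_simp
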